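/- arXiv:1309.1967 — 3 statements merged into one kernel-verified Lean document; each statement's English description precedes it below -/
import Mathlib

section
/- Let X be a real-valued random variable with mean zero, variance one, and all moments finite satisfying the moment bounds E[|X|^k] ≤ m^{k/2}·k!! for all k ≥ 0 (as follows from a log-Sobolev inequality with coefficient m). Then there exists a constant c depending only on m such that for all t ∈ [-1,1], exp(t²/2 - c|t|³) ≤ E[exp(tX)] ≤ exp(t²/2 + c|t|³). -/
set_option maxHeartbeats 1600000

open MeasureTheory Real

lemma exp_real_tsum (x : ℝ) : Real.exp x = ∑' n : ℕ, x ^ n / n.factorial := by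
  rw [Real.exp_eq_exp_ℝ, NormedSpace.exp_eq_tsum_div]

lemma factorial_add_three (i : ℕ) : ((i+3).factorial : ℝ) = (i+3)*(i+2)*(i+1)*i.factorial := by
  simp [Nat.factorial_succ]; push_cast; ring

lemma abs_exp_taylor2 (v : ℝ) :
    |Real.exp v - (1 + v + v ^ 2 / 2)| ≤ |v| ^ 3 * Real.exp |v| / 6 := by
  have hsum : Summable (fun n : ℕ => v ^ n / n.factorial) := Real.summable_pow_div_factorial v
  have hsuma : Summable (fun n : ℕ => |v| ^ n / n.factorial) := Real.summable_pow_div_factorial _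
  have h3 : (∑ i ∈ Finset.range 3, v ^ i / i.factorial)
      + (∑' i : ℕ, v ^ (i + 3) / (i + 3).factorial) = Real.exp v := by
    rw [exp_real_tsum]; exact Summable.sum_add_tsum_nat_add 3 hsum
  have hrange : (∑ i ∈ Finset.range 3, v ^ i / i.factorial) = 1 + v + v ^ 2 / 2 := by
    simp [Finset.sum_range_succ, Nat.factorial]
  have heq : Real.exp v - (1 + v + v ^ 2 / 2) = ∑' i : ℕ, v ^ (i + 3) / (i + 3).factorial := by
    rw [← hrange, ← h3]; ring
  have hsum3 : Summable (fun i : ℕ => |v| ^ (i + 3) / (i + 3).factorial) :=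
    (summable_nat_add_iff 3).mpr hsuma
  have hterm : ∀ i : ℕ, |v| ^ (i + 3) / ((i + 3).factorial : ℝ)
      ≤ (|v| ^ 3 / 6) * (|v| ^ i / i.factorial) := by
    intro i
    have h1 : (6 : ℝ) * i.factorial ≤ ((i+3).factorial : ℝ) := by
      rw [factorial_add_three]
      have hf1 : (1:ℝ) ≤ i.factorial := by exact_mod_cast Nat.one_le_iff_ne_zero.mpr i.factorial_ne_zero
      have hx : (0:ℝ) ≤ (i:ℝ) := Nat.cast_nonneg i
      have h6 : (6:ℝ) ≤ ((i:ℝ)+3)*((i:ℝ)+2)*((i:ℝ)+1) := by nlinarith [mul_nonneg (mul_nonneg hx hx) hx, mul_nonneg hx hx]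
      nlinarith
    have hf : (0:ℝ) < i.factorial := by positivity
    have heq2 : (|v| ^ 3 / 6) * (|v| ^ i / i.factorial) = |v|^(i+3) / (6 * i.factorial) := by
      rw [pow_add]; ring
    rw [heq2]
    exact div_le_div_of_nonneg_left (by positivity) (by positivity) h1
  have habs : |∑' i : ℕ, v ^ (i + 3) / (i + 3).factorial|
      ≤ ∑' i : ℕ, (|v| ^ 3 / 6) * (|v| ^ i / i.factorial) := by
    have hs2 : Summable (fun i : ℕ => (|v| ^ 3 / 6) * (|v| ^ i / i.factorial)) :=
      hsuma.mul_left _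
    calc |∑' i : ℕ, v ^ (i + 3) / (i + 3).factorial|
        = ‖∑' i : ℕ, v ^ (i + 3) / (i + 3).factorial‖ := (Real.norm_eq_abs _).symm
      _ ≤ ∑' i : ℕ, ‖v ^ (i + 3) / (i + 3).factorial‖ := by
          apply norm_tsum_le_tsum_norm
          simpa [Real.norm_eq_abs, abs_div, abs_pow] using hsum3
      _ ≤ ∑' i : ℕ, (|v| ^ 3 / 6) * (|v| ^ i / i.factorial) := by
          apply Summable.tsum_le_tsum _ _ hs2
          · intro i
            rw [Real.norm_eq_abs, abs_div, abs_pow, Nat.abs_cast]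
            exact hterm i
          · simpa [Real.norm_eq_abs, abs_div, abs_pow] using hsum3
  rw [heq]
  calc |∑' i : ℕ, v ^ (i + 3) / (i + 3).factorial|
      ≤ ∑' i : ℕ, (|v| ^ 3 / 6) * (|v| ^ i / i.factorial) := habs
    _ = (|v| ^ 3 / 6) * Real.exp |v| := by rw [tsum_mul_left, ← exp_real_tsum]
    _ = |v| ^ 3 * Real.exp |v| / 6 := by ring

lemma exp_real_tsum' (x : ℝ) : Real.exp x = ∑' n : ℕ, x ^ n / n.factorial := by
  rw [Real.exp_eq_exp_ℝ, NormedSpace.exp_eq_tsum_div]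

lemma two_pow_sq_factorial_le (j : ℕ) :
    2 ^ j * (j.factorial * j.factorial) ≤ (2 * j).factorial := by
  induction j with
  | zero => simp
  | succ n ih =>
    have h2 : 2 * (n + 1) = (2 * n + 1) + 1 := by ring
    rw [h2, Nat.factorial_succ, Nat.factorial_succ]
    calc 2 ^ (n+1) * ((n+1).factorial * (n+1).factorial)
        = (2*(n+1)*(n+1)) * (2 ^ n * (n.factorial * n.factorial)) := by
          rw [Nat.factorial_succ]; ring
      _ ≤ ((2*n+1+1) * (2*n+1)) * (2*n).factorial := by
          apply Nat.mul_le_mul _ ih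
          nlinarith
      _ = (2*n+1+1) * ((2*n+1) * (2*n).factorial) := by ring

lemma series_bound (m s : ℝ) (hm : 0 < m) (hs : 0 ≤ s) :
    Summable (fun k : ℕ => s^k * m^((k:ℝ)/2) * (Nat.doubleFactorial k : ℝ) / k.factorial) ∧
    ∑' k : ℕ, s^k * m^((k:ℝ)/2) * (Nat.doubleFactorial k : ℝ) / k.factorial
      ≤ (1 + s * Real.sqrt m) * Real.exp (s^2*m) := by
  set b : ℕ → ℝ := fun k => s^k * m^((k:ℝ)/2) * (Nat.doubleFactorial k : ℝ) / k.factorial with hb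
  have hbnonneg : ∀ k, 0 ≤ b k := by
    intro k
    have := (Real.rpow_nonneg hm.le ((k:ℝ)/2))
    positivity
  set g : ℕ → ℝ := fun j => (s^2*m)^j / j.factorial with hg
  have hgsum : Summable g := Real.summable_pow_div_factorial _
  have hgnn : ∀ j, 0 ≤ g j := fun j => by
    have : (0:ℝ) ≤ (s^2*m)^j := by positivity
    positivity
  have hme : ∀ j : ℕ, m ^ (((2*j : ℕ):ℝ)/2) = m^j := by
    intro j
    have : ((2*j : ℕ):ℝ)/2 = (j:ℕ) := by push_cast; ring
    rw [this, Real.rpow_natCast]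
  have hmo : ∀ j : ℕ, m ^ (((2*j+1 : ℕ):ℝ)/2) = Real.sqrt m * m^j := by
    intro j
    have h1 : ((2*j+1 : ℕ):ℝ)/2 = (1:ℝ)/2 + (j:ℕ) := by push_cast; ring
    rw [h1, Real.rpow_add hm, Real.rpow_natCast, ← Real.sqrt_eq_rpow, mul_comm]
  have hbe : ∀ j : ℕ, b (2*j) ≤ g j := by
    intro j
    simp only [hb, hg]
    rw [hme j, Nat.doubleFactorial_two_mul]
    have hfac : (2:ℝ)^j * (j.factorial * j.factorial) ≤ ((2*j).factorial : ℝ) := by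
      exact_mod_cast two_pow_sq_factorial_le j
    have hP : (0:ℝ) ≤ s^(2*j) * m^j := by positivity
    have hkey : s^(2*j) * m^j * ((2:ℝ)^j * j.factorial) * j.factorial
        ≤ (s^2*m)^j * ((2*j).factorial : ℝ) := by
      have h2 : (s^2*m)^j = s^(2*j) * m^j := by rw [mul_pow, ← pow_mul]
      rw [h2]
      calc s^(2*j) * m^j * ((2:ℝ)^j * j.factorial) * j.factorial
          = (s^(2*j) * m^j) * ((2:ℝ)^j * (j.factorial * j.factorial)) := by ring
        _ ≤ (s^(2*j) * m^j) * ((2*j).factorial : ℝ) := mul_le_mul_of_nonneg_left hfac hP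
    rw [div_le_div_iff₀ (by positivity) (by positivity)]
    push_cast
    calc s ^ (2 * j) * m ^ j * ((2:ℝ) ^ j * j.factorial) * j.factorial
        ≤ (s^2*m)^j * ((2*j).factorial : ℝ) := hkey
      _ = (s ^ 2 * m) ^ j * ((2*j).factorial : ℝ) := rfl
  have hbo : ∀ j : ℕ, b (2*j+1) ≤ (s * Real.sqrt m) * g j := by
    intro j
    simp only [hb, hg]
    rw [hmo j]
    have hfact : ((2*j+1).factorial : ℝ) = ((2*j+1).doubleFactorial : ℝ) * ((2:ℝ)^j * j.factorial) := by
      have h1 : (2*j+1).factorial = (2*j+1).doubleFactorial * (2*j).doubleFactorial := by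
        exact_mod_cast Nat.factorial_eq_mul_doubleFactorial (2*j)
      rw [h1, Nat.doubleFactorial_two_mul]
      push_cast; ring
    have hdpos : (0:ℝ) < ((2*j+1).doubleFactorial : ℝ) := by
      exact_mod_cast (2*j+1).doubleFactorial_pos
    rw [hfact]
    have heq : s^(2*j+1) * (Real.sqrt m * m^j) * ((2*j+1).doubleFactorial : ℝ)
        / (((2*j+1).doubleFactorial : ℝ) * ((2:ℝ)^j * j.factorial))
        = (s * Real.sqrt m) * ((s^2*m)^j / ((2:ℝ)^j * j.factorial)) := by
      field_simp
      rw [mul_pow, ← pow_mul]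
      ring
    rw [heq]
    apply mul_le_mul_of_nonneg_left _ (by positivity)
    apply div_le_div_of_nonneg_left (by positivity) (by positivity)
    have h1 : (1:ℝ) ≤ 2^j := one_le_pow₀ (by norm_num)
    have h2 : (0:ℝ) < j.factorial := by exact_mod_cast j.factorial_pos
    nlinarith
  have he : Summable (fun j => b (2*j)) := Summable.of_nonneg_of_le (fun j => hbnonneg _) hbe hgsum
  have ho : Summable (fun j => b (2*j+1)) :=
    Summable.of_nonneg_of_le (fun j => hbnonneg _) hbo (hgsum.mul_left _)
  have hbsum : Summable b := he.even_add_odd ho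
  refine ⟨hbsum, ?_⟩
  have hsplit : (∑' j, b (2*j)) + (∑' j, b (2*j+1)) = ∑' k, b k := tsum_even_add_odd he ho
  have hgval : ∑' j, g j = Real.exp (s^2*m) := by rw [exp_real_tsum']
  have h1 : (∑' j, b (2*j)) ≤ Real.exp (s^2*m) := by
    rw [← hgval]; exact Summable.tsum_le_tsum hbe he hgsum
  have h2 : (∑' j, b (2*j+1)) ≤ (s * Real.sqrt m) * Real.exp (s^2*m) := by
    have := Summable.tsum_le_tsum hbo ho (hgsum.mul_left (s * Real.sqrt m))
    rwa [tsum_mul_left, hgval] at this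
  rw [← hsplit]
  have hsm : 0 ≤ s * Real.sqrt m := by positivity
  nlinarith [Real.exp_pos (s^2*m)]

lemma exp_real_tsum'' (x : ℝ) : Real.exp x = ∑' n : ℕ, x ^ n / n.factorial := by
  rw [Real.exp_eq_exp_ℝ, NormedSpace.exp_eq_tsum_div]

lemma exp_moment_bound (m : ℝ) (hm : 0 < m) (Ω : Type) [MeasureSpace Ω]
    (hprob : IsProbabilityMeasure (volume : Measure Ω))
    (X : Ω → ℝ) (hX : Measurable X)
    (hInt : ∀ k : ℕ, Integrable (fun ω => |X ω| ^ k))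
    (hMom : ∀ k : ℕ, (∫ ω, |X ω| ^ k) ≤ m ^ ((k : ℝ) / 2) * (Nat.doubleFactorial k : ℝ))
    (s : ℝ) (hs : 0 ≤ s)
    (hser : Summable (fun k : ℕ => s^k * m^((k:ℝ)/2) * (Nat.doubleFactorial k : ℝ) / k.factorial))
    (T : ℝ) (hT : 0 ≤ T)
    (hsum : ∑' k : ℕ, s^k * m^((k:ℝ)/2) * (Nat.doubleFactorial k : ℝ) / k.factorial ≤ T) :
    Integrable (fun ω => Real.exp (s * |X ω|)) ∧
    (∫ ω, Real.exp (s * |X ω|)) ≤ T := by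
  set b : ℕ → ℝ := fun k => s^k * m^((k:ℝ)/2) * (Nat.doubleFactorial k : ℝ) / k.factorial with hbdef
  have hbnn : ∀ k, 0 ≤ b k := by
    intro k
    have := Real.rpow_nonneg hm.le ((k:ℝ)/2)
    positivity
  -- pointwise series expansion
  have hexp : ∀ ω, Real.exp (s * |X ω|) = ∑' k : ℕ, (s^k / k.factorial) * |X ω|^k := by
    intro ω
    rw [exp_real_tsum'']
    congr 1; funext k; rw [mul_pow]; ring
  have htermnn : ∀ (k : ℕ) (ω : Ω), 0 ≤ (s^k / k.factorial) * |X ω|^k := by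
    intro k ω; positivity
  have htermsum : ∀ ω, Summable (fun k : ℕ => (s^k / k.factorial) * |X ω|^k) := by
    intro ω
    have := Real.summable_pow_div_factorial (s * |X ω|)
    apply this.congr
    intro k; rw [mul_pow]; ring
  have hmeas : ∀ k : ℕ, Measurable (fun ω => ENNReal.ofReal ((s^k / k.factorial) * |X ω|^k)) := by
    intro k
    exact (((hX.abs.pow_const k).const_mul _)).ennreal_ofReal
  -- lintegral bound
  have hlin : (∫⁻ ω, ENNReal.ofReal (Real.exp (s * |X ω|))) ≤ ENNReal.ofReal T := by
    have h1 : (∫⁻ ω, ENNReal.ofReal (Real.exp (s * |X ω|)))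
        = ∑' k : ℕ, ∫⁻ ω, ENNReal.ofReal ((s^k / k.factorial) * |X ω|^k) := by
      rw [← lintegral_tsum (fun k => (hmeas k).aemeasurable)]
      congr 1; funext ω
      rw [hexp ω, ENNReal.ofReal_tsum_of_nonneg (htermnn · ω) (htermsum ω)]
    have h2 : ∀ k : ℕ, (∫⁻ ω, ENNReal.ofReal ((s^k / k.factorial) * |X ω|^k))
        ≤ ENNReal.ofReal (b k) := by
      intro k
      have hint : Integrable (fun ω => (s^k / k.factorial) * |X ω|^k) := (hInt k).const_mul _
      rw [← ofReal_integral_eq_lintegral_ofReal hint (ae_of_all _ (htermnn k))]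
      apply ENNReal.ofReal_le_ofReal
      rw [integral_const_mul]
      have h3 : (s^k / k.factorial) * (∫ ω, |X ω|^k)
          ≤ (s^k / k.factorial) * (m ^ ((k : ℝ) / 2) * (Nat.doubleFactorial k : ℝ)) :=
        mul_le_mul_of_nonneg_left (hMom k) (by positivity)
      calc (s^k / k.factorial) * (∫ ω, |X ω|^k)
          ≤ (s^k / k.factorial) * (m ^ ((k : ℝ) / 2) * (Nat.doubleFactorial k : ℝ)) := h3
        _ = b k := by rw [hbdef]; ring
    calc (∫⁻ ω, ENNReal.ofReal (Real.exp (s * |X ω|)))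
        = ∑' k : ℕ, ∫⁻ ω, ENNReal.ofReal ((s^k / k.factorial) * |X ω|^k) := h1
      _ ≤ ∑' k : ℕ, ENNReal.ofReal (b k) := ENNReal.tsum_le_tsum h2
      _ = ENNReal.ofReal (∑' k, b k) := (ENNReal.ofReal_tsum_of_nonneg hbnn hser).symm
      _ ≤ ENNReal.ofReal T := ENNReal.ofReal_le_ofReal hsum
  have hnn : (0:Ω→ℝ) ≤ᵐ[volume] fun ω => Real.exp (s * |X ω|) :=
    ae_of_all _ (fun ω => (Real.exp_pos _).le)
  have hmeas2 : Measurable (fun ω => Real.exp (s * |X ω|)) := (hX.abs.const_mul s).exp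
  have hintexp : Integrable (fun ω => Real.exp (s * |X ω|)) := by
    refine ⟨hmeas2.aestronglyMeasurable, ?_⟩
    rw [hasFiniteIntegral_iff_ofReal hnn]
    exact lt_of_le_of_lt hlin ENNReal.ofReal_lt_top
  refine ⟨hintexp, ?_⟩
  rw [integral_eq_lintegral_of_nonneg_ae hnn hmeas2.aestronglyMeasurable]
  exact ENNReal.toReal_le_of_le_ofReal hT hlin

section LaplaceAux

lemma cube_le_exp_quarter (x : ℝ) (hx : 0 ≤ x) : x^3 ≤ 384 * Real.exp (x/4) := by
  have h := Real.pow_div_factorial_le_exp (x := x/4) (by positivity) 3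
  have : (x/4)^3 / (3:ℕ).factorial = x^3 / 384 := by
    norm_num [Nat.factorial]; ring
  rw [this] at h
  linarith

end LaplaceAux


/-- Laplace transform bounds for a centered, unit-variance random
variable with double-factorial moment bounds. The constant `c` depends only on `m`. -/
theorem laplace_transform_bounds (m : ℝ) (hm : 0 < m) :
    ∃ c : ℝ, 0 < c ∧
      ∀ (Ω : Type) (_ : MeasureSpace Ω), IsProbabilityMeasure (volume : Measure Ω) →
      ∀ X : Ω → ℝ, Measurable X →
      (∀ k : ℕ, Integrable (fun ω => |X ω| ^ k)) →
      (∫ ω, X ω) = 0 →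
      (∫ ω, (X ω) ^ 2) = 1 →
      (∀ k : ℕ, (∫ ω, |X ω| ^ k) ≤ m ^ ((k : ℝ) / 2) * (Nat.doubleFactorial k : ℝ)) →
      (∀ t ∈ Set.Icc (-1 : ℝ) 1, Integrable (fun ω => Real.exp (t * X ω))) →
      ∀ t ∈ Set.Icc (-1 : ℝ) 1,
        Real.exp (t ^ 2 / 2 - c * |t| ^ 3) ≤ (∫ ω, Real.exp (t * X ω)) ∧
        (∫ ω, Real.exp (t * X ω)) ≤ Real.exp (t ^ 2 / 2 + c * |t| ^ 3) := by
  set A : ℝ := (1 + (5/4) * Real.sqrt m) * Real.exp ((5/4:ℝ)^2 * m) with hAdef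
  have hApos : 0 < A := by
    have := Real.sqrt_nonneg m
    have := Real.exp_pos ((5/4:ℝ)^2 * m)
    positivity
  refine ⟨64 * A + 1, by positivity, ?_⟩
  intro Ω Ms hprob X hX hInt hmean hvar hMom hLap t ht
  obtain ⟨ht1, ht2⟩ := ht
  have htabs : |t| ≤ 1 := abs_le.mpr ⟨ht1, ht2⟩
  obtain ⟨hser, hsum⟩ := series_bound m (5/4) hm (by norm_num)
  have hsum' : ∑' k : ℕ, (5/4:ℝ)^k * m^((k:ℝ)/2) * (Nat.doubleFactorial k : ℝ) / k.factorial ≤ A := by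
    rw [hAdef]; exact hsum
  obtain ⟨hAint, hAval⟩ :=
    exp_moment_bound m hm Ω hprob X hX hInt hMom (5/4) (by norm_num) hser A hApos.le hsum'
  clear_value A
  -- basic integrabilities
  have hXint : Integrable X := by
    refine (hInt 1).mono' hX.aestronglyMeasurable (ae_of_all _ fun ω => ?_)
    simp [Real.norm_eq_abs]
  have hX2int : Integrable (fun ω => (X ω)^2) :=
    (hInt 2).congr (ae_of_all _ fun ω => sq_abs (X ω))
  have hexpt : Integrable (fun ω => Real.exp (t * X ω)) := hLap t ⟨ht1, ht2⟩
  have i0 : Integrable (fun _ : Ω => (1:ℝ)) := integrable_const 1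
  have i1 : Integrable (fun ω => t * X ω) := hXint.const_mul t
  have i01 : Integrable (fun ω => 1 + t * X ω) := i0.add i1
  have i2 : Integrable (fun ω => (t^2/2) * (X ω)^2) := hX2int.const_mul _
  -- polynomial part
  set P : Ω → ℝ := fun ω => 1 + t * X ω + (t^2/2) * (X ω)^2 with hPdef
  have hPint : Integrable P := i01.add i2
  have hPval : (∫ ω, P ω) = 1 + t^2/2 := by
    rw [hPdef]
    rw [integral_add i01 i2, integral_add i0 i1,
      integral_const, integral_const_mul, integral_const_mul, hmean, hvar]
    simp [measure_univ]
  -- pointwise remainder bound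
  have hptw : ∀ ω, |Real.exp (t * X ω) - P ω| ≤ 64 * |t|^3 * Real.exp ((5/4) * |X ω|) := by
    intro ω
    have h0 := abs_exp_taylor2 (t * X ω)
    have hPeq : 1 + t * X ω + (t * X ω)^2 / 2 = P ω := by rw [hPdef]; ring
    rw [hPeq] at h0
    have habs : |t * X ω| = |t| * |X ω| := abs_mul t (X ω)
    have hxe : Real.exp |t * X ω| ≤ Real.exp |X ω| := by
      apply Real.exp_le_exp.mpr
      rw [habs]
      nlinarith [abs_nonneg (X ω), abs_nonneg t]
    have hcube : |X ω|^3 ≤ 384 * Real.exp (|X ω|/4) := cube_le_exp_quarter _ (abs_nonneg _)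
    have hx3 : |t * X ω|^3 = |t|^3 * |X ω|^3 := by rw [habs, mul_pow]
    have hchain : |t * X ω| ^ 3 * Real.exp |t * X ω| / 6
        ≤ 64 * |t|^3 * Real.exp ((5/4) * |X ω|) := by
      have h1 : |t * X ω| ^ 3 * Real.exp |t * X ω| ≤ (|t|^3 * |X ω|^3) * Real.exp |X ω| := by
        rw [hx3]
        apply mul_le_mul_of_nonneg_left hxe (by positivity)
      have h2 : (|t|^3 * |X ω|^3) * Real.exp |X ω|
          ≤ |t|^3 * (384 * Real.exp (|X ω|/4)) * Real.exp |X ω| := by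
        have := mul_le_mul_of_nonneg_left hcube (by positivity : (0:ℝ) ≤ |t|^3)
        exact mul_le_mul_of_nonneg_right (by nlinarith [Real.exp_pos (|X ω|/4)]) (Real.exp_pos _).le
      have hee : Real.exp (|X ω|/4) * Real.exp |X ω| = Real.exp ((5/4) * |X ω|) := by
        rw [← Real.exp_add]; ring_nf
      have h3 : |t|^3 * (384 * Real.exp (|X ω|/4)) * Real.exp |X ω|
          = 384 * |t|^3 * Real.exp ((5/4) * |X ω|) := by
        rw [← hee]; ring
      nlinarith [Real.exp_pos ((5/4) * |X ω|), abs_nonneg t]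
    exact le_trans h0 hchain
  -- remainder integral bound
  have hRint : Integrable (fun ω => Real.exp (t * X ω) - P ω) := hexpt.sub hPint
  have hGint : Integrable (fun ω => 64 * |t|^3 * Real.exp ((5/4) * |X ω|)) := hAint.const_mul _
  have hRbd : |∫ ω, (Real.exp (t * X ω) - P ω)| ≤ 64 * A * |t|^3 := by
    calc |∫ ω, (Real.exp (t * X ω) - P ω)| ≤ ∫ ω, |Real.exp (t * X ω) - P ω| := by
          simpa [Real.norm_eq_abs] using
            norm_integral_le_integral_norm (fun ω => Real.exp (t * X ω) - P ω)
      _ ≤ ∫ ω, 64 * |t|^3 * Real.exp ((5/4) * |X ω|) :=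
          integral_mono hRint.abs hGint hptw
      _ = 64 * |t|^3 * ∫ ω, Real.exp ((5/4) * |X ω|) := integral_const_mul _ _
      _ ≤ 64 * A * |t|^3 := by
          have h1 : 64 * |t|^3 * (∫ ω, Real.exp ((5/4) * |X ω|)) ≤ 64 * |t|^3 * A :=
            mul_le_mul_of_nonneg_left hAval (by positivity)
          nlinarith
  have hEeq : (∫ ω, Real.exp (t * X ω)) = (1 + t^2/2) + ∫ ω, (Real.exp (t * X ω) - P ω) := by
    rw [integral_sub hexpt hPint, hPval]; ring
  have hE1 : 1 ≤ ∫ ω, Real.exp (t * X ω) := by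
    have hmono : (∫ ω, (1 + t * X ω)) ≤ ∫ ω, Real.exp (t * X ω) := by
      apply integral_mono i01 hexpt
      intro ω
      have := Real.add_one_le_exp (t * X ω)
      simpa [add_comm] using this
    have hval : (∫ ω, (1 + t * X ω)) = 1 := by
      rw [integral_add i0 i1, integral_const, integral_const_mul, hmean]
      simp [measure_univ]
    linarith [hval ▸ hmono]
  -- final arithmetic
  set E : ℝ := ∫ ω, Real.exp (t * X ω) with hEdef
  set r : ℝ := ∫ ω, (Real.exp (t * X ω) - P ω) with hrdef
  clear_value E r
  obtain ⟨hr1, hr2⟩ := abs_le.mp hRbd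
  have ht3 : (0:ℝ) ≤ |t|^3 := by positivity
  have ht2sq : t^2 ≤ 1 := by nlinarith [sq_abs t, abs_nonneg t]
  constructor
  · -- lower bound
    by_cases hcase : t^2/2 - (64 * A + 1) * |t|^3 ≤ 0
    · calc Real.exp (t^2/2 - (64 * A + 1) * |t|^3) ≤ 1 := Real.exp_le_one_iff.mpr hcase
        _ ≤ E := hE1
    · push_neg at hcase
      set u : ℝ := t^2/2 - (64 * A + 1) * |t|^3 with hudef
      clear_value u
      have hu1 : u ≤ t^2/2 := by
        have : 0 ≤ (64 * A + 1) * |t|^3 := by positivity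
        linarith
      have hu2 : u ≤ 1 := by linarith
      have hexpu : Real.exp u ≤ 1 + u + u^2 := by
        have h := Real.exp_bound' hcase.le hu2 (n := 2) (by norm_num)
        have hs2 : (∑ i ∈ Finset.range 2, u ^ i / i.factorial) = 1 + u := by
          simp [Finset.sum_range_succ, Nat.factorial]
        rw [hs2] at h
        norm_num [Nat.factorial] at h
        nlinarith [sq_nonneg u]
      have ht4 : t^4 ≤ |t|^3 := by
        have h1 : t^4 = |t|^4 := by
          rw [← abs_pow]
          exact (abs_of_nonneg (by positivity)).symm
        rw [h1, pow_succ]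
        nlinarith
      have hu3 : u^2 ≤ |t|^3 / 4 := by
        have : u^2 ≤ (t^2/2)^2 := by nlinarith
        nlinarith
      have hElow : 1 + t^2/2 - 64 * A * |t|^3 ≤ E := by
        rw [hEeq]; linarith
      calc Real.exp u ≤ 1 + u + u^2 := hexpu
        _ ≤ 1 + t^2/2 - 64 * A * |t|^3 := by linarith
        _ ≤ E := hElow
  · -- upper bound
    have h1 : E ≤ 1 + t^2/2 + 64 * A * |t|^3 := by rw [hEeq]; linarith
    have h2 : (t^2/2 + (64 * A + 1) * |t|^3) + 1 ≤ Real.exp (t^2/2 + (64 * A + 1) * |t|^3) :=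
      Real.add_one_le_exp _
    have h3 : 64 * A * |t|^3 ≤ (64 * A + 1) * |t|^3 := by nlinarith
    linarith
end

section
/- Fix integers s₁,…,s_m ≥ 0 and polynomials q₁,…,q_m in one variable. Then the polynomial h(x,y) = ∑ over m-tuples of distinct indices (i₁,…,i_m) from {1,…,N} of ∏_{j=1}^m x_{i_j}^{s_j} q_j(y_{i_j}) can be written as a finite ℤ-linear combination of products of the form ∏_{j=1}^l (∑_{i=1}^N x_i^{t_j} q̃_j(y_i)) for suitable integers t_j and polynomials q̃_j. -/
open Finset

section Aux

variable (N : ℕ)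

/-- power-sum type expression -/
noncomputable abbrev psum (t : ℕ) (qt : Polynomial ℝ) : MvPolynomial (Fin N ⊕ Fin N) ℝ :=
  ∑ i : Fin N, (MvPolynomial.X (Sum.inl i)) ^ t *
    Polynomial.aeval (MvPolynomial.X (Sum.inr i)) qt

/-- the generating set -/
abbrev Sset : Set (MvPolynomial (Fin N ⊕ Fin N) ℝ) :=
  {p : MvPolynomial (Fin N ⊕ Fin N) ℝ |
    ∃ (l : ℕ) (t : Fin l → ℕ) (qt : Fin l → Polynomial ℝ),
      p = ∏ j : Fin l, ∑ i : Fin N,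
        (MvPolynomial.X (Sum.inl i)) ^ (t j) *
          Polynomial.aeval (MvPolynomial.X (Sum.inr i)) (qt j)}

lemma one_mem_Sset : (1 : MvPolynomial (Fin N ⊕ Fin N) ℝ) ∈ Sset N :=
  ⟨0, ![], ![], by simp⟩

lemma psum_mul_mem_Sset (t : ℕ) (qt : Polynomial ℝ)
    {p : MvPolynomial (Fin N ⊕ Fin N) ℝ} (hp : p ∈ Sset N) :
    psum N t qt * p ∈ Sset N := by
  obtain ⟨l, t', qt', rfl⟩ := hp
  refine ⟨l + 1, Fin.cons t t', Fin.cons qt qt', ?_⟩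
  rw [Fin.prod_univ_succ]
  simp

lemma psum_mul_mem_span (t : ℕ) (qt : Polynomial ℝ)
    {a : MvPolynomial (Fin N ⊕ Fin N) ℝ} (ha : a ∈ Submodule.span ℤ (Sset N)) :
    psum N t qt * a ∈ Submodule.span ℤ (Sset N) := by
  refine Submodule.span_induction ?_ ?_ ?_ ?_ ha
  · intro y hy
    exact Submodule.subset_span (psum_mul_mem_Sset N t qt hy)
  · simp
  · intro x y _ _ hx hy
    rw [mul_add]; exact Submodule.add_mem _ hx hy
  · intro c x _ hx
    rw [mul_smul_comm]; exact Submodule.smul_mem _ _ hx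

/-- snoc of an embedding and a fresh element -/
def snocEmb {m : ℕ} (g : Fin m ↪ Fin N) (i : Fin N) (hi : ∀ j, g j ≠ i) :
    Fin (m + 1) ↪ Fin N :=
  ⟨Fin.snoc g i, by
    intro a b hab
    rcases Fin.eq_castSucc_or_eq_last a with ⟨a', rfl⟩ | rfl <;>
      rcases Fin.eq_castSucc_or_eq_last b with ⟨b', rfl⟩ | rfl
    · simp only [Fin.snoc_castSucc] at hab
      exact congrArg Fin.castSucc (g.injective hab)
    · simp only [Fin.snoc_castSucc, Fin.snoc_last] at hab
      exact absurd hab (hi a')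
    · simp only [Fin.snoc_castSucc, Fin.snoc_last] at hab
      exact absurd hab.symm (hi b')
    · rfl⟩

lemma snocEmb_bijective (m : ℕ) :
    Function.Bijective
      (fun p : Σ g : Fin m ↪ Fin N, {i : Fin N // ∀ j, g j ≠ i} =>
        snocEmb N p.1 p.2.1 p.2.2) := by
  constructor
  · rintro ⟨g, i, hi⟩ ⟨g', i', hi'⟩ h
    have hfun : Fin.snoc (α := fun _ => Fin N) g i = Fin.snoc g' i' :=
      congrArg (fun e => (e : Fin (m+1) ↪ Fin N).toFun) h
    have hg : g = g' := DFunLike.ext _ _ fun j => by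
      simpa using congrFun hfun (Fin.castSucc j)
    subst hg
    have hii : i = i' := by simpa using congrFun hfun (Fin.last m)
    subst hii
    rfl
  · intro f
    have hinj : Function.Injective (fun j : Fin m => f (Fin.castSucc j)) :=
      fun a b h => Fin.castSucc_injective _ (f.injective h)
    refine ⟨⟨⟨fun j => f (Fin.castSucc j), hinj⟩, f (Fin.last m), fun j hj => ?_⟩, ?_⟩
    · exact (Fin.castSucc_lt_last j).ne (f.injective hj)
    · ext a
      refine Fin.lastCases ?_ ?_ a
      · simp [snocEmb, Fin.snoc_last]
      · intro a'
        simp [snocEmb, Fin.snoc_castSucc]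

end Aux

lemma key_lemma (N : ℕ) : ∀ (m : ℕ) (s : Fin m → ℕ) (q : Fin m → Polynomial ℝ),
    (∑ f : Fin m ↪ Fin N, ∏ j : Fin m,
        (MvPolynomial.X (Sum.inl (f j)) : MvPolynomial (Fin N ⊕ Fin N) ℝ) ^ (s j) *
          Polynomial.aeval (MvPolynomial.X (Sum.inr (f j))) (q j))
      ∈ Submodule.span ℤ (Sset N) := by
  intro m
  induction m with
  | zero =>
    intro s q
    have : (∑ f : Fin 0 ↪ Fin N, ∏ j : Fin 0,
        (MvPolynomial.X (Sum.inl (f j)) : MvPolynomial (Fin N ⊕ Fin N) ℝ) ^ (s j) *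
          Polynomial.aeval (MvPolynomial.X (Sum.inr (f j))) (q j)) = 1 := by
      simp
    rw [this]
    exact Submodule.subset_span (one_mem_Sset N)
  | succ m ih =>
    intro s q
    have hT : ∀ (j : Fin (m+1)) (i : Fin N), True := fun _ _ => trivial
    set T : Fin (m+1) → Fin N → MvPolynomial (Fin N ⊕ Fin N) ℝ :=
      fun j i => (MvPolynomial.X (Sum.inl i)) ^ (s j) *
        Polynomial.aeval (MvPolynomial.X (Sum.inr i)) (q j) with hTdef
    -- step 1: reindex the sum via snocEmb
    have step1 : (∑ f : Fin (m+1) ↪ Fin N, ∏ j, T j (f j))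
        = ∑ g : Fin m ↪ Fin N, ∑ i : {i : Fin N // ∀ j, g j ≠ i},
            (∏ j : Fin m, T (Fin.castSucc j) (g j)) * T (Fin.last m) i.1 := by
      rw [← Fintype.sum_bijective _ (snocEmb_bijective N m) _ _ (fun _ => rfl),
        ← Finset.univ_sigma_univ, Finset.sum_sigma]
      refine Finset.sum_congr rfl fun g _ => Finset.sum_congr rfl fun i _ => ?_
      have hco : ∀ j : Fin (m+1), (snocEmb N g i.1 i.2) j = Fin.snoc (α := fun _ => Fin N) (⇑g) i.1 j := fun _ => rfl
      simp only [hco]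
      rw [Fin.prod_univ_castSucc]
      simp [Fin.snoc_castSucc, Fin.snoc_last]
    -- step 2: inner sum over the complement
    have step2 : ∀ g : Fin m ↪ Fin N,
        (∑ i : {i : Fin N // ∀ j, g j ≠ i},
            (∏ j : Fin m, T (Fin.castSucc j) (g j)) * T (Fin.last m) i.1)
        = (∏ j : Fin m, T (Fin.castSucc j) (g j)) * psum N (s (Fin.last m)) (q (Fin.last m))
          - ∑ k : Fin m, (∏ j : Fin m, T (Fin.castSucc j) (g j)) * T (Fin.last m) (g k) := by
      intro g
      have h1 : (∑ i ∈ Finset.univ \ Finset.univ.image g,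
            (∏ j : Fin m, T (Fin.castSucc j) (g j)) * T (Fin.last m) i)
          = ∑ i : {i : Fin N // ∀ j, g j ≠ i},
            (∏ j : Fin m, T (Fin.castSucc j) (g j)) * T (Fin.last m) i.1 :=
        Finset.sum_subtype _ (fun i => by simp [eq_comm])
          (fun i => (∏ j : Fin m, T (Fin.castSucc j) (g j)) * T (Fin.last m) i)
      rw [← h1, Finset.sum_sdiff_eq_sub (Finset.subset_univ _), ← Finset.mul_sum,
        Finset.sum_image (fun a _ b _ h => g.injective h)]
    rw [step1]
    simp only [step2]
    rw [Finset.sum_sub_distrib]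
    refine Submodule.sub_mem _ ?_ ?_
    · -- first part: psum * (sum over embeddings for m)
      have hc : (∑ g : Fin m ↪ Fin N,
          (∏ j : Fin m, T (Fin.castSucc j) (g j)) * psum N (s (Fin.last m)) (q (Fin.last m)))
          = psum N (s (Fin.last m)) (q (Fin.last m)) *
            ∑ g : Fin m ↪ Fin N, ∏ j : Fin m, T (Fin.castSucc j) (g j) := by
        rw [Finset.mul_sum]
        exact Finset.sum_congr rfl fun g _ => mul_comm _ _
      rw [hc]
      exact psum_mul_mem_span N _ _
        (ih (fun j => s (Fin.castSucc j)) (fun j => q (Fin.castSucc j)))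
    · -- second part: sum over k of merged sums
      rw [Finset.sum_comm]
      refine Submodule.sum_mem _ fun k _ => ?_
      have hmerge : ∀ g : Fin m ↪ Fin N,
          (∏ j : Fin m,
              (MvPolynomial.X (Sum.inl (g j)) : MvPolynomial (Fin N ⊕ Fin N) ℝ) ^
                (s (Fin.castSucc j) + if j = k then s (Fin.last m) else 0) *
              Polynomial.aeval (MvPolynomial.X (Sum.inr (g j)))
                (q (Fin.castSucc j) * if j = k then q (Fin.last m) else 1))
          = (∏ j : Fin m, T (Fin.castSucc j) (g j)) * T (Fin.last m) (g k) := by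
        intro g
        have hpt : ∀ j : Fin m,
            (MvPolynomial.X (Sum.inl (g j)) : MvPolynomial (Fin N ⊕ Fin N) ℝ) ^
                (s (Fin.castSucc j) + if j = k then s (Fin.last m) else 0) *
              Polynomial.aeval (MvPolynomial.X (Sum.inr (g j)))
                (q (Fin.castSucc j) * if j = k then q (Fin.last m) else 1)
            = T (Fin.castSucc j) (g j) * (if j = k then T (Fin.last m) (g j) else 1) := by
          intro j
          by_cases hjk : j = k
          · subst hjk
            simp only [eq_self_iff_true, if_true, hTdef]
            rw [pow_add, map_mul]
            ring
          · simp [hjk, hTdef]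
        calc (∏ j : Fin m,
              (MvPolynomial.X (Sum.inl (g j)) : MvPolynomial (Fin N ⊕ Fin N) ℝ) ^
                (s (Fin.castSucc j) + if j = k then s (Fin.last m) else 0) *
              Polynomial.aeval (MvPolynomial.X (Sum.inr (g j)))
                (q (Fin.castSucc j) * if j = k then q (Fin.last m) else 1))
            = ∏ j : Fin m, T (Fin.castSucc j) (g j) *
                (if j = k then T (Fin.last m) (g j) else 1) :=
              Finset.prod_congr rfl fun j _ => hpt j
          _ = (∏ j : Fin m, T (Fin.castSucc j) (g j)) *
                ∏ j : Fin m, (if j = k then T (Fin.last m) (g j) else 1) :=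
              Finset.prod_mul_distrib
          _ = (∏ j : Fin m, T (Fin.castSucc j) (g j)) * T (Fin.last m) (g k) := by
              rw [Finset.prod_ite_eq' Finset.univ k (fun j => T (Fin.last m) (g j)),
                if_pos (Finset.mem_univ k)]
      have hsum : (∑ g : Fin m ↪ Fin N,
          (∏ j : Fin m, T (Fin.castSucc j) (g j)) * T (Fin.last m) (g k))
          = ∑ g : Fin m ↪ Fin N, ∏ j : Fin m,
              (MvPolynomial.X (Sum.inl (g j)) : MvPolynomial (Fin N ⊕ Fin N) ℝ) ^
                (s (Fin.castSucc j) + if j = k then s (Fin.last m) else 0) *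
              Polynomial.aeval (MvPolynomial.X (Sum.inr (g j)))
                (q (Fin.castSucc j) * if j = k then q (Fin.last m) else 1) :=
        Finset.sum_congr rfl fun g _ => (hmerge g).symm
      rw [hsum]
      exact ih (fun j => s (Fin.castSucc j) + if j = k then s (Fin.last m) else 0)
        (fun j => q (Fin.castSucc j) * if j = k then q (Fin.last m) else 1)

/-- the sum over tuples of distinct indices of products
`∏_j x_{i_j}^{s_j} q_j(y_{i_j})` lies in the ℤ-span of products of power-sum type
expressions `∏_j (∑_i x_i^{t_j} q̃_j(y_i))`. Variables are indexed by
`Fin N ⊕ Fin N`: `inl i` is `x_i` and `inr i` is `y_i`. -/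
theorem distinct_sum_in_span_of_power_sums (N m : ℕ)
    (s : Fin m → ℕ) (q : Fin m → Polynomial ℝ) :
    (∑ f : Fin m ↪ Fin N, ∏ j : Fin m,
        (MvPolynomial.X (Sum.inl (f j)) : MvPolynomial (Fin N ⊕ Fin N) ℝ) ^ (s j) *
          Polynomial.aeval (MvPolynomial.X (Sum.inr (f j))) (q j))
      ∈ Submodule.span ℤ
        {p : MvPolynomial (Fin N ⊕ Fin N) ℝ |
          ∃ (l : ℕ) (t : Fin l → ℕ) (qt : Fin l → Polynomial ℝ),
            p = ∏ j : Fin l, ∑ i : Fin N,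
              (MvPolynomial.X (Sum.inl i)) ^ (t j) *
                Polynomial.aeval (MvPolynomial.X (Sum.inr i)) (qt j)} :=
  key_lemma N m s q
end

section
/- With B an N×N real symmetric matrix with eigenvalues λ_i, θ ∈ ℝ∖{0} small, v = R_B(2θ), one has the identity θv - (1/(2N))∑_{i=1}^N log(1 - 2θλ_i + 2θv) = (1/2)∫_0^{2θ} R_B(s) ds, where R_B is the R-transform of the empirical spectral distribution of B. -/
open Finset intervalIntegral


lemma vdiff_aux (N : ℕ) (hN : 0 < N) (lam : Fin N → ℝ) (t : ℝ) (v : ℝ → ℝ)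
    (hv_cont : ContinuousOn v (Set.uIcc 0 t))
    (hpos : ∀ s ∈ Set.uIcc (0 : ℝ) t, ∀ i, 0 < 1 - s * lam i + s * v s)
    (hv : ∀ s ∈ Set.uIcc (0 : ℝ) t, s ≠ 0 →
      (1 / (N : ℝ)) * ∑ i, 1 / (1 - s * lam i + s * v s) = 1)
    (s₀ : ℝ) (hs₀ : s₀ ∈ Set.Ioo (min 0 t) (max 0 t)) : ∃ d, HasDerivAt v d s₀ := by
  haveI : Nonempty (Fin N) := Fin.pos_iff_nonempty.mp hN
  have hNne : (N : ℝ) ≠ 0 := Nat.cast_ne_zero.mpr hN.ne'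
  have hsub : Set.Ioo (min 0 t) (max 0 t) ⊆ Set.uIcc 0 t := by
    rw [Set.uIcc]; exact Set.Ioo_subset_Icc_self
  have hne : ∀ x ∈ Set.Ioo (min 0 t) (max 0 t), x ≠ 0 := by
    intro x hx hx0
    rcases hx with ⟨h1, h2⟩
    rw [hx0] at h1 h2
    rw [min_lt_iff] at h1; rw [lt_max_iff] at h2
    rcases h1 with h | h <;> rcases h2 with h' | h' <;> linarith
  have hnhds : Set.Ioo (min 0 t) (max 0 t) ∈ nhds s₀ := isOpen_Ioo.mem_nhds hs₀
  have hs₀u : s₀ ∈ Set.uIcc 0 t := hsub hs₀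
  have hs₀ne : s₀ ≠ 0 := hne s₀ hs₀
  set w₀ : ℝ := v s₀ with hw₀
  set a₀ : ℝ × ℝ := (s₀, w₀) with ha₀
  set Φ : ℝ × ℝ → ℝ := fun p => ∑ i, (1 - p.1 * lam i + p.1 * p.2)⁻¹ with hΦ
  have hg0 : ∀ i, 1 - s₀ * lam i + s₀ * w₀ ≠ 0 := fun i => (hpos s₀ hs₀u i).ne'
  -- smoothness of Φ
  have hΦC : ContDiffAt ℝ 1 Φ a₀ := by
    apply ContDiffAt.sum
    intro i _
    apply ContDiffAt.inv
    · exact ((contDiff_const.sub (contDiff_fst.mul contDiff_const)).add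
        (contDiff_fst.mul contDiff_snd)).contDiffAt
    · exact hg0 i
  have hΦd : DifferentiableAt ℝ Φ a₀ := hΦC.differentiableAt one_ne_zero
  set L : ℝ × ℝ →L[ℝ] ℝ := fderiv ℝ Φ a₀ with hLdef
  -- partial derivative in second coordinate
  have hcurve : HasDerivAt (fun y : ℝ => ((s₀, y) : ℝ × ℝ)) ((0 : ℝ), (1 : ℝ)) w₀ :=
    (hasDerivAt_const _ _).prodMk (hasDerivAt_id _)
  have h1 : HasDerivAt (fun y : ℝ => Φ (s₀, y)) (L ((0 : ℝ), (1 : ℝ))) w₀ :=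
    hΦd.hasFDerivAt.comp_hasDerivAt _ hcurve
  have h2 : HasDerivAt (fun y : ℝ => Φ (s₀, y))
      (∑ i, -s₀ / (1 - s₀ * lam i + s₀ * w₀) ^ 2) w₀ := by
    apply HasDerivAt.fun_sum
    intro i _
    have hlin : HasDerivAt (fun y : ℝ => 1 - s₀ * lam i + s₀ * y) s₀ w₀ := by
      simpa using (hasDerivAt_const w₀ (1 - s₀ * lam i)).fun_add
        ((hasDerivAt_id w₀).const_mul s₀)
    exact hlin.inv (hg0 i)
  have hm : L ((0 : ℝ), (1 : ℝ)) = ∑ i, -s₀ / (1 - s₀ * lam i + s₀ * w₀) ^ 2 := h1.unique h2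
  set m : ℝ := L ((0 : ℝ), (1 : ℝ)) with hmdef
  have hmne : m ≠ 0 := by
    rw [hm]
    have : ∑ i, -s₀ / (1 - s₀ * lam i + s₀ * w₀) ^ 2
        = -s₀ * ∑ i, ((1 - s₀ * lam i + s₀ * w₀) ^ 2)⁻¹ := by
      rw [Finset.mul_sum]
      exact Finset.sum_congr rfl fun i _ => by rw [div_eq_mul_inv]
    rw [this]
    have hsumpos : 0 < ∑ i, ((1 - s₀ * lam i + s₀ * w₀) ^ 2)⁻¹ :=
      Finset.sum_pos (fun i _ => by have := hg0 i; positivity) Finset.univ_nonempty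
    intro hcon
    rcases mul_eq_zero.mp hcon with h | h
    · exact hs₀ne (neg_eq_zero.mp h)
    · exact hsumpos.ne' h
  set m2 : ℝ := L ((1 : ℝ), (0 : ℝ)) with hm2def
  have hL : ∀ x y : ℝ, L (x, y) = x * m2 + y * m := by
    intro x y
    have hxy : ((x, y) : ℝ × ℝ) = x • ((1 : ℝ), (0 : ℝ)) + y • ((0 : ℝ), (1 : ℝ)) := by
      simp [Prod.ext_iff]
    rw [hxy, map_add, map_smul, map_smul, smul_eq_mul, smul_eq_mul]
  -- the continuous linear equiv
  set Afwd : ℝ × ℝ →L[ℝ] ℝ × ℝ := (ContinuousLinearMap.fst ℝ ℝ ℝ).prod L with hAfwd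
  set Ainv : ℝ × ℝ →L[ℝ] ℝ × ℝ := (ContinuousLinearMap.fst ℝ ℝ ℝ).prod
      (m⁻¹ • (ContinuousLinearMap.snd ℝ ℝ ℝ - m2 • ContinuousLinearMap.fst ℝ ℝ ℝ)) with hAinv
  have hleft : Function.LeftInverse Ainv Afwd := by
    intro p
    rcases p with ⟨x, y⟩
    simp only [hAfwd, hAinv, ContinuousLinearMap.prod_apply, ContinuousLinearMap.coe_fst',
      ContinuousLinearMap.smul_apply, ContinuousLinearMap.sub_apply,
      ContinuousLinearMap.coe_snd', ContinuousLinearMap.coe_smul', Pi.smul_apply]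
    refine Prod.ext rfl ?_
    simp only [hL x y, smul_eq_mul]
    field_simp
    ring
  have hright : Function.RightInverse Ainv Afwd := by
    intro q
    rcases q with ⟨u, s⟩
    simp only [hAfwd, hAinv, ContinuousLinearMap.prod_apply, ContinuousLinearMap.coe_fst',
      ContinuousLinearMap.smul_apply, ContinuousLinearMap.sub_apply,
      ContinuousLinearMap.coe_snd', ContinuousLinearMap.coe_smul', Pi.smul_apply]
    refine Prod.ext rfl ?_
    rw [hL]
    simp only [smul_eq_mul]
    field_simp
    ring
  set A : (ℝ × ℝ) ≃L[ℝ] (ℝ × ℝ) := ContinuousLinearEquiv.equivOfInverse Afwd Ainv hleft hright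
    with hA
  have hAcoe : (A : ℝ × ℝ →L[ℝ] ℝ × ℝ) = Afwd := rfl
  set G : ℝ × ℝ → ℝ × ℝ := fun p => (p.1, Φ p) with hG
  have hGfd : HasFDerivAt G (A : ℝ × ℝ →L[ℝ] ℝ × ℝ) a₀ := by
    rw [hAcoe, hAfwd]
    exact (hasFDerivAt_fst).prodMk hΦd.hasFDerivAt
  have hGC : ContDiffAt ℝ 1 G a₀ := contDiffAt_fst.prodMk hΦC
  have hGs : HasStrictFDerivAt G (A : ℝ × ℝ →L[ℝ] ℝ × ℝ) a₀ :=
    hGC.hasStrictFDerivAt' hGfd one_ne_zero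
  -- local inverse
  set ψ : ℝ × ℝ → ℝ × ℝ := hGs.localInverse G A a₀ with hψ
  have hev : ∀ᶠ p in nhds a₀, ψ (G p) = p := hGs.eventually_left_inverse
  have hvc : ContinuousAt v s₀ := hv_cont.continuousAt (Filter.mem_of_superset hnhds hsub)
  have hcurvec : ContinuousAt (fun x : ℝ => ((x, v x) : ℝ × ℝ)) s₀ :=
    continuousAt_id.prodMk hvc
  have hev' : ∀ᶠ x in nhds s₀, ψ (G (x, v x)) = (x, v x) := hcurvec.eventually hev
  have hΦcurve : ∀ᶠ x in nhds s₀, Φ (x, v x) = (N : ℝ) := by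
    filter_upwards [hnhds] with x hx
    have hxu := hsub hx
    have := hv x hxu (hne x hx)
    have hsum : ∑ i, 1 / (1 - x * lam i + x * v x) = (N : ℝ) := by
      field_simp at this
      linarith [this]
    simpa [hΦ, one_div] using hsum
  have hfin : ∀ᶠ x in nhds s₀, (ψ (x, (N : ℝ))).2 = v x := by
    filter_upwards [hev', hΦcurve] with x h1 h2
    have : G (x, v x) = (x, (N : ℝ)) := by rw [hG]; exact Prod.ext rfl h2
    rw [this] at h1
    rw [h1]
  have hΦa₀ : Φ a₀ = (N : ℝ) := hΦcurve.self_of_nhds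
  have hGa₀ : G a₀ = (s₀, (N : ℝ)) := Prod.ext rfl hΦa₀
  have hψs : HasStrictFDerivAt ψ (A.symm : ℝ × ℝ →L[ℝ] ℝ × ℝ) (s₀, (N : ℝ)) := by
    rw [← hGa₀]; exact hGs.to_localInverse
  have hline : HasDerivAt (fun x : ℝ => ((x, (N : ℝ)) : ℝ × ℝ)) ((1 : ℝ), (0 : ℝ)) s₀ :=
    (hasDerivAt_id _).prodMk (hasDerivAt_const _ _)
  have hcomp : HasDerivAt (fun x : ℝ => ψ (x, (N : ℝ)))
      ((A.symm : ℝ × ℝ →L[ℝ] ℝ × ℝ) ((1 : ℝ), (0 : ℝ))) s₀ :=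
    HasFDerivAt.comp_hasDerivAt s₀ hψs.hasFDerivAt hline
  have hsnd := HasFDerivAt.comp_hasDerivAt s₀
    ((ContinuousLinearMap.snd ℝ ℝ ℝ).hasFDerivAt (x := ψ (s₀, (N : ℝ)))) hcomp
  exact ⟨_, hsnd.congr_of_eventuallyEq (hfin.mono fun x hx => hx.symm)⟩

/-- with `v(s) = R_B(s)` (characterized by
`(1/N) ∑ 1/(1 - s λ_i + s v(s)) = 1` for `s ≠ 0`), one has
`θ v(2θ) - (1/(2N)) ∑ log(1 - 2θλ_i + 2θ v(2θ)) = (1/2) ∫_0^{2θ} R_B(s) ds`. -/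
theorem r_transform_primitive_identity (N : ℕ) (hN : 0 < N) (lam : Fin N → ℝ)
    (θ : ℝ) (hθ : θ ≠ 0) (v : ℝ → ℝ)
    (hv_cont : ContinuousOn v (Set.uIcc 0 (2 * θ)))
    (hpos : ∀ s ∈ Set.uIcc (0 : ℝ) (2 * θ), ∀ i, 0 < 1 - s * lam i + s * v s)
    (hv : ∀ s ∈ Set.uIcc (0 : ℝ) (2 * θ), s ≠ 0 →
      (1 / (N : ℝ)) * ∑ i, 1 / (1 - s * lam i + s * v s) = 1) :
    θ * v (2 * θ)
        - (1 / (2 * (N : ℝ))) * ∑ i, Real.log (1 - 2 * θ * lam i + 2 * θ * v (2 * θ))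
      = (1 / 2) * ∫ s in (0 : ℝ)..(2 * θ), v s := by
  have hNne : (N : ℝ) ≠ 0 := Nat.cast_ne_zero.mpr hN.ne'
  set t : ℝ := 2 * θ with ht
  have hsub : Set.Ioo (min 0 t) (max 0 t) ⊆ Set.uIcc 0 t := by
    rw [Set.uIcc]; exact Set.Ioo_subset_Icc_self
  have hne : ∀ x ∈ Set.Ioo (min 0 t) (max 0 t), x ≠ 0 := by
    intro x hx hx0
    rcases hx with ⟨h1, h2⟩
    rw [hx0] at h1 h2
    rw [min_lt_iff] at h1; rw [lt_max_iff] at h2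
    rcases h1 with h | h <;> rcases h2 with h' | h' <;> linarith
  set f : ℝ → ℝ := fun s => s * v s / 2
      - (1 / (2 * (N : ℝ))) * ∑ i, Real.log (1 - s * lam i + s * v s) with hf
  -- continuity of f
  have hgcont : ∀ i : Fin N, ContinuousOn (fun s : ℝ => 1 - s * lam i + s * v s)
      (Set.uIcc 0 t) := fun i =>
    (continuousOn_const.sub (continuousOn_id.mul continuousOn_const)).add
      (continuousOn_id.mul hv_cont)
  have hcont : ContinuousOn f (Set.uIcc 0 t) := by
    apply ContinuousOn.sub
    · exact (continuousOn_id.mul hv_cont).div_const 2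
    · exact continuousOn_const.mul (continuousOn_finset_sum _ fun i _ =>
        (hgcont i).log fun s hs => (hpos s hs i).ne')
  -- derivative of f on the open interval
  have hderiv : ∀ x ∈ Set.Ioo (min 0 t) (max 0 t),
      HasDerivWithinAt f (v x / 2) (Set.Ioi x) x := by
    intro x hx
    obtain ⟨d, hd⟩ := vdiff_aux N hN lam t v hv_cont hpos hv x hx
    have hxu : x ∈ Set.uIcc 0 t := hsub hx
    have hxne : x ≠ 0 := hne x hx
    have hgx : ∀ i, 1 - x * lam i + x * v x ≠ 0 := fun i => (hpos x hxu i).ne'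
    have hS1 : ∑ i, (1 - x * lam i + x * v x)⁻¹ = (N : ℝ) := by
      have := hv x hxu hxne
      field_simp at this
      simp only [one_div] at this ⊢
      linarith
    -- derivatives of the pieces
    have hgd : ∀ i : Fin N, HasDerivAt (fun s : ℝ => 1 - s * lam i + s * v s)
        (v x + x * d - lam i) x := by
      intro i
      have h1 : HasDerivAt (fun s : ℝ => 1 - s * lam i) (-lam i) x := by
        simpa using (hasDerivAt_const x (1 : ℝ)).fun_sub ((hasDerivAt_id x).mul_const (lam i))
      have h2 : HasDerivAt (fun s : ℝ => s * v s) (1 * v x + x * d) x :=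
        (hasDerivAt_id x).mul hd
      have := h1.fun_add h2
      exact this.congr_deriv (by ring)
    have hlogd : HasDerivAt (fun s : ℝ => ∑ i, Real.log (1 - s * lam i + s * v s))
        (∑ i, (v x + x * d - lam i) / (1 - x * lam i + x * v x)) x :=
      HasDerivAt.fun_sum fun i _ => (hgd i).log (hgx i)
    have hf1 : HasDerivAt (fun s : ℝ => s * v s / 2) ((1 * v x + x * d) / 2) x :=
      ((hasDerivAt_id x).mul hd).div_const 2
    have htotal : HasDerivAt f ((1 * v x + x * d) / 2
        - (1 / (2 * (N : ℝ))) * ∑ i, (v x + x * d - lam i) / (1 - x * lam i + x * v x)) x :=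
      hf1.sub (hlogd.const_mul _)
    -- identify the derivative with v x / 2
    have hzero : ∑ i, (v x - lam i) / (1 - x * lam i + x * v x) = 0 := by
      have hterm : ∀ i : Fin N, (v x - lam i) / (1 - x * lam i + x * v x)
          = (1 - (1 - x * lam i + x * v x)⁻¹) / x := by
        intro i
        rw [div_eq_div_iff (hgx i) hxne, sub_mul, sub_mul, one_mul, inv_mul_cancel₀ (hgx i)]
        ring
      rw [Finset.sum_congr rfl fun i _ => hterm i, ← Finset.sum_div,
        Finset.sum_sub_distrib, Finset.sum_const, hS1]
      simp
    have hS2 : ∑ i, (v x + x * d - lam i) / (1 - x * lam i + x * v x) = x * d * N := by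
      have hsplit : ∀ i : Fin N, (v x + x * d - lam i) / (1 - x * lam i + x * v x)
          = (v x - lam i) / (1 - x * lam i + x * v x)
            + (x * d) * (1 - x * lam i + x * v x)⁻¹ := by
        intro i
        have harr : v x + x * d - lam i = (v x - lam i) + x * d := by ring
        rw [harr, add_div]
        simp [div_eq_mul_inv]
      rw [Finset.sum_congr rfl fun i _ => hsplit i, Finset.sum_add_distrib, hzero,
        ← Finset.mul_sum, hS1, zero_add]
    have : (1 * v x + x * d) / 2
        - (1 / (2 * (N : ℝ))) * ∑ i, (v x + x * d - lam i) / (1 - x * lam i + x * v x)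
        = v x / 2 := by
      rw [hS2]
      field_simp
      ring
    rw [this] at htotal
    exact htotal.hasDerivWithinAt
  have hint : IntervalIntegrable (fun s => v s / 2) MeasureTheory.volume 0 t :=
    (hv_cont.div_const 2).intervalIntegrable
  have key : ∫ s in (0:ℝ)..t, v s / 2 = f t - f 0 :=
    integral_eq_sub_of_hasDeriv_right hcont hderiv hint
  have hf0 : f 0 = 0 := by simp [hf]
  have hft : f t = t * v t / 2
      - (1 / (2 * (N : ℝ))) * ∑ i, Real.log (1 - t * lam i + t * v t) := rfl
  have hintdiv : ∫ s in (0:ℝ)..t, v s / 2 = (∫ s in (0:ℝ)..t, v s) / 2 :=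
    intervalIntegral.integral_div 2 v
  rw [hf0, hft, sub_zero, hintdiv] at key
  have : θ * v t = t * v t / 2 := by rw [ht]; ring
  rw [this]
  rw [← key]
  ring
end
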